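/- arXiv:2108.03610 — 4 statements merged into one kernel-verified Lean document; each statement's English description precedes it below -/
import Mathlib

section
/- Let f₀, f₁, g₀, g₁ be paths in a topological space X such that f₀ is homotopically close to g₀ rel ∂I, f₁ is homotopically close to g₁ rel ∂I, and f₀(1) = f₁(0) = g₀(1) = g₁(0). Then the concatenation f₀ * f₁ is homotopically close to g₀ * g₁ rel ∂I. Moreover, the reverse path f₀⁻¹ is homotopically close to g₀⁻¹ rel ∂I. -/
open unitInterval

noncomputable section

attribute [local instance] Path.Homotopic.setoid

variable {X Y : Type*} [TopologicalSpace X] [TopologicalSpace Y]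

/-- `HClose f g` : the path `f` is homotopically close to the path `g` rel `∂I`:
for every partition `0 = t₀ < t₁ < ⋯ < tₙ = 1` and every sequence of open sets
`U₁, …, Uₙ` with `g [tᵢ₋₁, tᵢ] ⊆ Uᵢ`, there is a path `γ`, homotopic to `f` rel `∂I`,
with `γ [tᵢ₋₁, tᵢ] ⊆ Uᵢ` and `γ tᵢ = g tᵢ` for all `i`. -/
def HClose {a b : X} (f g : Path a b) : Prop :=
  ∀ (n : ℕ) (t : Fin (n + 1) → I), t 0 = 0 → t (Fin.last n) = 1 → StrictMono t →
    ∀ U : Fin n → Set X, (∀ i, IsOpen (U i)) →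
      (∀ i : Fin n, g '' Set.Icc (t i.castSucc) (t i.succ) ⊆ U i) →
      ∃ γ : Path a b,
        (∀ i : Fin n, γ '' Set.Icc (t i.castSucc) (t i.succ) ⊆ U i) ∧
        (∀ i : Fin (n + 1), γ (t i) = g (t i)) ∧ γ.Homotopic f

/-- The class of a loop at `x` as an element of the fundamental group. -/
def pathClass {x : X} (f : Path x x) : FundamentalGroup X x :=
  FundamentalGroup.fromPath ⟦f⟧

/-- The `H`-quasi-small loop set `π_H^qs(X, x)`. -/
def qsSet (x : X) (H : Set (FundamentalGroup X x)) : Set (FundamentalGroup X x) :=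
  { p | ∃ f h : Path x x, pathClass f = p ∧ pathClass h ∈ H ∧ HClose f h }

/-- The quasi-small loop group `π₁^qs(X, x)`. -/
def qs (x : X) : Set (FundamentalGroup X x) :=
  qsSet x (⊥ : Subgroup (FundamentalGroup X x))

/-- The Spanier group of `(X, x)` with respect to the cover `𝒰`. -/
def spanierCover (x : X) (𝒰 : Set (Set X)) : Subgroup (FundamentalGroup X x) :=
  Subgroup.closure { p | ∃ (y : X) (u : Path x y) (v : Path y y) (U : Set X),
    U ∈ 𝒰 ∧ Set.range v ⊆ U ∧ p = pathClass ((u.trans v).trans u.symm) }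

/-- The (unbased) Spanier group `π₁^sp(X, x)`. -/
def spanierGroup (x : X) : Subgroup (FundamentalGroup X x) :=
  ⨅ (𝒰 : Set (Set X)) (_ : ∀ U ∈ 𝒰, IsOpen U) (_ : ⋃₀ 𝒰 = Set.univ), spanierCover x 𝒰

/-- The small generated subgroup `π₁^sg(X, x)`. -/
def smallGenerated (x : X) : Subgroup (FundamentalGroup X x) :=
  Subgroup.closure { p | ∃ (y : X) (β : Path x y) (α : Path y y),
    HClose α (Path.refl y) ∧ p = pathClass ((β.trans α).trans β.symm) }

/-- `X` is homotopically path Hausdorff relative to `H ⊆ π₁(X, x)`. -/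
def HPHausdorffRel (x : X) (H : Set (FundamentalGroup X x)) : Prop :=
  ∀ (y : X) (α β : Path x y), pathClass (α.trans β.symm) ∉ H →
    ∃ (n : ℕ) (t : Fin (n + 1) → I), t 0 = 0 ∧ t (Fin.last n) = 1 ∧ StrictMono t ∧
      ∃ U : Fin n → Set X, (∀ i, IsOpen (U i)) ∧
        (∀ i : Fin n, α '' Set.Icc (t i.castSucc) (t i.succ) ⊆ U i) ∧
        ∀ γ : Path x y, (∀ i : Fin n, γ '' Set.Icc (t i.castSucc) (t i.succ) ⊆ U i) →
          (∀ i : Fin (n + 1), γ (t i) = α (t i)) → pathClass (γ.trans β.symm) ∉ H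

lemma symm_mem_Icc_iff {x y z : I} : σ z ∈ Set.Icc x y ↔ z ∈ Set.Icc (σ y) (σ x) := by
  simp only [Set.mem_Icc, ← Subtype.coe_le_coe, coe_symm_eq]
  constructor <;> rintro ⟨h1, h2⟩ <;> constructor <;> linarith

lemma path_symm_image {a b : X} (p : Path a b) (x y : I) :
    p.symm '' Set.Icc x y = p '' Set.Icc (σ y) (σ x) := by
  ext z
  constructor
  · rintro ⟨w, hw, rfl⟩
    exact ⟨σ w, symm_mem_Icc_iff.mp (by rwa [symm_symm]), rfl⟩
  · rintro ⟨w, hw, rfl⟩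
    exact ⟨σ w, symm_mem_Icc_iff.mpr hw, by simp [Path.symm_apply]⟩

lemma hclose_symm {a b : X} {f g : Path a b} (h : HClose f g) : HClose f.symm g.symm := by
  intro n t ht0 htl hmono U hUopen hgU
  have hsa : StrictAnti (σ : I → I) := fun x y hxy => by
    rw [← Subtype.coe_lt_coe, coe_symm_eq, coe_symm_eq]
    have := Subtype.coe_lt_coe.mpr hxy
    linarith
  obtain ⟨γ, hA, hB, hC⟩ := h n (fun i => σ (t i.rev))
    (by simp [Fin.rev_zero, htl])
    (by simp [Fin.rev_last, ht0])
    (fun i j hij => hsa (hmono (Fin.rev_lt_rev.mpr hij)))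
    (fun i => U i.rev) (fun i => hUopen i.rev)
    (fun i => by
      simp only [Fin.rev_castSucc, Fin.rev_succ, ← path_symm_image]
      exact hgU i.rev)
  refine ⟨γ.symm, fun i => ?_, fun i => ?_, ?_⟩
  · rw [path_symm_image]
    have := hA i.rev
    simp only [Fin.rev_castSucc, Fin.rev_succ, Fin.rev_rev] at this
    exact this
  · have := hB i.rev
    rw [Fin.rev_rev] at this
    simpa [Path.symm_apply] using this
  · exact ⟨hC.some.symm₂⟩

lemma hclose_mono {a b : X} {f g : Path a b} (h : HClose f g)
    (n : ℕ) (t : Fin (n + 1) → I) (ht0 : t 0 = 0) (htl : t (Fin.last n) = 1)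
    (hmono : Monotone t) (U : Fin n → Set X) (hUo : ∀ i, IsOpen (U i))
    (hgU : ∀ i : Fin n, g '' Set.Icc (t i.castSucc) (t i.succ) ⊆ U i) :
    ∃ γ : Path a b,
      (∀ i : Fin n, γ '' Set.Icc (t i.castSucc) (t i.succ) ⊆ U i) ∧
      (∀ i : Fin (n + 1), γ (t i) = g (t i)) ∧ γ.Homotopic f := by
  classical
  set S : Finset I := Finset.image t Finset.univ with hS
  have hSne : S.Nonempty := ⟨t 0, Finset.mem_image_of_mem t (Finset.mem_univ 0)⟩
  obtain ⟨p, hp⟩ : ∃ p, S.card = p + 1 :=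
    ⟨S.card - 1, (Nat.succ_pred_eq_of_pos (Finset.card_pos.mpr hSne)).symm⟩
  set e := S.orderIsoOfFin hp with he
  set s : Fin (p + 1) → I := fun j => (e j : I) with hs
  have hssm : StrictMono s := fun i j hij => Subtype.coe_lt_coe.mpr (e.strictMono hij)
  have hmem : ∀ j, s j ∈ S := fun j => (e j).2
  have hsur : ∀ x ∈ S, ∃ j, s j = x := fun x hx =>
    ⟨e.symm ⟨x, hx⟩, by simp [hs]⟩
  have htmem : ∀ i, t i ∈ S := fun i => Finset.mem_image_of_mem t (Finset.mem_univ i)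
  have hs0 : s 0 = 0 := by
    obtain ⟨j, hj⟩ := hsur 0 (ht0 ▸ htmem 0)
    exact le_antisymm (hj ▸ hssm.monotone (Fin.zero_le j)) nonneg'
  have hsl : s (Fin.last p) = 1 := by
    obtain ⟨j, hj⟩ := hsur 1 (htl ▸ htmem (Fin.last n))
    exact le_antisymm le_one' (hj ▸ hssm.monotone (Fin.le_last j))
  have key : ∀ j : Fin p, ∃ i : Fin n, t i.castSucc = s j.castSucc ∧ t i.succ = s j.succ := by
    intro j
    set F : Finset (Fin (n + 1)) := Finset.univ.filter (fun i => t i = s j.castSucc) with hF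
    obtain ⟨i0, _, hi0⟩ := Finset.mem_image.mp (hmem j.castSucc)
    have hFne : F.Nonempty := ⟨i0, by simp [hF, hi0]⟩
    set imax := F.max' hFne with him
    have h1 : t imax = s j.castSucc := by
      have := F.max'_mem hFne
      simp only [hF, Finset.mem_filter] at this
      exact this.2
    have hmax : ∀ i, t i = s j.castSucc → i ≤ imax := fun i hi =>
      F.le_max' i (by simp [hF, hi])
    have hlt : s j.castSucc < s j.succ := hssm (Fin.castSucc_lt_succ : j.castSucc < j.succ)
    have hne : imax ≠ Fin.last n := by
      intro hcontra
      rw [hcontra, htl] at h1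
      have h2 : s j.succ ≤ s j.castSucc := by rw [← h1]; exact le_one'
      exact absurd (hlt.trans_le h2) (lt_irrefl _)
    have hvlt : imax.val < n :=
      lt_of_le_of_ne (Nat.lt_succ_iff.mp imax.isLt) (fun hv => hne (Fin.ext hv))
    set isucc : Fin (n + 1) := (⟨imax.val, hvlt⟩ : Fin n).succ with hisucc
    refine ⟨⟨imax.val, hvlt⟩, ?_, ?_⟩
    · have hcs : (⟨imax.val, hvlt⟩ : Fin n).castSucc = imax := Fin.ext rfl
      rw [hcs]; exact h1
    · have hgt : s j.castSucc < t isucc := by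
        rcases lt_or_ge (s j.castSucc) (t isucc) with h' | h'
        · exact h'
        · exfalso
          have hge : t imax ≤ t isucc := hmono (by rw [Fin.le_def]; simp [hisucc])
          have heq : t isucc = s j.castSucc := le_antisymm h' (h1 ▸ hge)
          have hle := hmax isucc heq
          rw [Fin.le_def] at hle
          simp [hisucc] at hle
      obtain ⟨j2, hj2⟩ := hsur (t isucc) (htmem isucc)
      have hjj : j.castSucc < j2 := hssm.lt_iff_lt.mp (by rw [hj2]; exact hgt)
      have hge2 : s j.succ ≤ t isucc := by
        rw [← hj2]
        exact hssm.monotone (by rw [Fin.le_def]; have := Fin.lt_def.mp hjj; simp at this ⊢; omega)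
      obtain ⟨i2, _, hi2⟩ := Finset.mem_image.mp (hmem j.succ)
      have hi2gt : imax < i2 := hmono.reflect_lt (by rw [h1, hi2]; exact hlt)
      have hle2 : t isucc ≤ s j.succ := by
        rw [← hi2]
        exact hmono (by rw [Fin.le_def]; have := Fin.lt_def.mp hi2gt; simp [hisucc]; omega)
      exact le_antisymm hle2 hge2
  choose ι hι1 hι2 using key
  obtain ⟨γ, hA, hB, hC⟩ := h p s hs0 hsl hssm (fun j => U (ι j)) (fun j => hUo _)
    (fun j => by rw [← hι1 j, ← hι2 j]; exact hgU (ι j))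
  have hptw : ∀ x, x ∈ S → γ x = g x := by
    intro x hx
    obtain ⟨j, hj⟩ := hsur x hx
    rw [← hj]; exact hB j
  refine ⟨γ, ?_, fun i => hptw _ (htmem i), hC⟩
  intro i
  rcases eq_or_lt_of_le (hmono (Fin.castSucc_lt_succ : i.castSucc < i.succ).le) with heq | hlt
  · rintro z ⟨w, hw, rfl⟩
    have hw' : w = t i.castSucc := le_antisymm (heq ▸ hw.2) hw.1
    rw [hptw w (hw' ▸ htmem i.castSucc)]
    exact hgU i ⟨w, hw, rfl⟩
  · obtain ⟨j, hj⟩ := hsur (t i.castSucc) (htmem _)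
    obtain ⟨j', hj'⟩ := hsur (t i.succ) (htmem _)
    have hjj' : j < j' := hssm.lt_iff_lt.mp (by rw [hj, hj']; exact hlt)
    rw [Fin.lt_def] at hjj'
    have hsucc : j'.val = j.val + 1 := by
      by_contra hc
      have h2 : j.val + 1 < j'.val := by omega
      set jm : Fin (p + 1) := ⟨j.val + 1, by omega⟩ with hjm
      have hm1 : s j < s jm := hssm (by rw [Fin.lt_def]; simp [hjm])
      have hm2 : s jm < s j' := hssm (by rw [Fin.lt_def]; simp [hjm]; omega)
      obtain ⟨l, _, hl⟩ := Finset.mem_image.mp (hmem jm)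
      have hlgt : i.castSucc < l := hmono.reflect_lt (by rw [hl, ← hj]; exact hm1)
      have hl2 : i.succ ≤ l := by
        rw [Fin.le_def]; have := Fin.lt_def.mp hlgt; simp at this ⊢; omega
      have h5 : t i.succ ≤ t l := hmono hl2
      rw [← hj', hl] at h5
      exact absurd (lt_of_le_of_lt h5 hm2) (lt_irrefl _)
    have hjp : j.val < p := by have := j'.isLt; omega
    set jh : Fin p := ⟨j.val, hjp⟩ with hjh
    have e1 : jh.castSucc = j := Fin.ext rfl
    have e2 : jh.succ = j' := Fin.ext (by simp [hjh, hsucc])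
    have hAj := hA jh
    rw [e1, e2, hj, hj'] at hAj
    have hii : ι jh = i := by
      have p1 : t (ι jh).castSucc = t i.castSucc := by rw [hι1 jh, e1, hj]
      have p2 : t (ι jh).succ = t i.succ := by rw [hι2 jh, e2, hj']
      rcases lt_trichotomy (ι jh) i with hlt' | heq' | hgt'
      · exfalso
        have hle : (ι jh).succ ≤ i.castSucc := by
          rw [Fin.le_def]; have := Fin.lt_def.mp hlt'; simp at this ⊢; omega
        have := hmono hle
        rw [p2] at this
        exact absurd (lt_of_lt_of_le hlt this) (lt_irrefl _)
      · exact heq'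
      · exfalso
        have hle : i.succ ≤ (ι jh).castSucc := by
          rw [Fin.le_def]; have := Fin.lt_def.mp hgt'; simp at this ⊢; omega
        have := hmono hle
        rw [p1] at this
        exact absurd (lt_of_lt_of_le hlt this) (lt_irrefl _)
    rw [hii] at hAj
    exact hAj

lemma trans_eval_left {a b c : X} (p : Path a b) (p' : Path b c) (x y : I)
    (hxy : 2 * (x : ℝ) = y) : (p.trans p') x = p y := by
  rw [Path.trans_apply, dif_pos (show (x:ℝ) ≤ 1/2 by have := y.2.2; linarith)]
  exact congrArg p (Subtype.ext hxy)

lemma trans_eval_right {a b c : X} (p : Path a b) (p' : Path b c) (x y : I)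
    (hxy : 2 * (x : ℝ) - 1 = y) : (p.trans p') x = p' y := by
  rw [Path.trans_apply]
  split_ifs with hx
  · have hy0 : (y : ℝ) = 0 := le_antisymm (by linarith) y.2.1
    have key : ∀ z : I, (z : ℝ) = 1 → p z = b := fun z hz => by
      rw [show z = 1 from Subtype.ext (by rw [hz]; rfl)]; exact p.target
    rw [key _ (show (2 * (x:ℝ)) = 1 by linarith),
      show y = 0 from Subtype.ext (by rw [hy0]; rfl), p'.source]
  · exact congrArg p' (Subtype.ext hxy)

lemma hclose_trans {a b c : X} {f₀ g₀ : Path a b} {f₁ g₁ : Path b c}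
    (h₀ : HClose f₀ g₀) (h₁ : HClose f₁ g₁) : HClose (f₀.trans f₁) (g₀.trans g₁) := by
  intro N t ht0 htl hsm U hUo hgU
  rcases N with _ | m
  · exfalso
    have h01 : (0 : I) = 1 := by
      rw [← ht0, ← htl]; exact congrArg t (Fin.ext rfl)
    have := congrArg Subtype.val h01
    norm_num at this
  classical
  set T : ℕ → I := fun j => t ⟨min j (m + 1), by omega⟩ with hT
  have hTt : ∀ i : Fin (m + 2), t i = T i.val := fun i =>
    congrArg t (Fin.ext (Nat.min_eq_left (Nat.lt_succ_iff.mp i.isLt)).symm)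
  have hT0 : T 0 = 0 := by
    have h := hTt 0; simp only [Fin.val_zero] at h; rw [← h, ht0]
  have hTl : ∀ j, m + 1 ≤ j → T j = 1 := fun j hj => by
    have : (⟨min j (m + 1), by omega⟩ : Fin (m + 2)) = Fin.last (m + 1) :=
      Fin.ext (by simp [Fin.last, Nat.min_eq_right hj])
    show t _ = 1
    rw [this, htl]
  have hTmono : Monotone T := fun i j hij =>
    hsm.monotone (Fin.mk_le_mk.mpr (by omega))
  have hTsm : ∀ {i j : ℕ}, i < j → j ≤ m + 1 → T i < T j := fun {i j} hij hj =>
    hsm (Fin.mk_lt_mk.mpr (by omega))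
  have hex : ∃ j, j ≤ m ∧ (1/2 : ℝ) ≤ T (j + 1) :=
    ⟨m, le_refl m, by rw [hTl (m + 1) le_rfl]; norm_num⟩
  obtain ⟨k, hkle, hk2, hk1⟩ :
      ∃ k, k ≤ m ∧ (1/2 : ℝ) ≤ T (k + 1) ∧ (T k : ℝ) < 1/2 := by
    refine ⟨Nat.find hex, (Nat.find_spec hex).1, (Nat.find_spec hex).2, ?_⟩
    rcases Nat.eq_zero_or_pos (Nat.find hex) with h0 | hpos
    · rw [h0, hT0]; norm_num
    · have hmin := Nat.find_min hex (show Nat.find hex - 1 < Nat.find hex by omega)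
      push_neg at hmin
      have h2 := hmin (by have := (Nat.find_spec hex).1; omega)
      rwa [Nat.sub_add_cancel hpos] at h2
  have hTlow : ∀ j, j ≤ k → (T j : ℝ) < 1/2 := fun j hj =>
    lt_of_le_of_lt (Subtype.coe_le_coe.mpr (hTmono hj)) hk1
  have hThigh : ∀ j, k + 1 ≤ j → (1/2 : ℝ) ≤ T j := fun j hj =>
    le_trans hk2 (Subtype.coe_le_coe.mpr (hTmono hj))
  set R : ℕ → I := fun j => ⟨min (2 * (T j : ℝ)) 1,
    Set.mem_Icc.mpr ⟨le_min (by have := (T j).2.1; linarith) zero_le_one, min_le_right _ _⟩⟩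
    with hR
  set Q : ℕ → I := fun j => ⟨max (2 * (T (k + j) : ℝ) - 1) 0,
    Set.mem_Icc.mpr ⟨le_max_right _ _,
      max_le (by have := (T (k + j)).2.2; linarith) zero_le_one⟩⟩ with hQ
  have hRval : ∀ j, (R j : ℝ) = min (2 * (T j : ℝ)) 1 := fun j => rfl
  have hQval : ∀ j, (Q j : ℝ) = max (2 * (T (k + j) : ℝ) - 1) 0 := fun j => rfl
  have hRmono : Monotone R := fun i j hij => Subtype.coe_le_coe.mp (by
    rw [hRval, hRval]
    exact min_le_min (by have := Subtype.coe_le_coe.mpr (hTmono hij); linarith) le_rfl)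
  have hQmono : Monotone Q := fun i j hij => Subtype.coe_le_coe.mp (by
    rw [hQval, hQval]
    exact max_le_max (by have := Subtype.coe_le_coe.mpr (hTmono (by omega : k + i ≤ k + j)); linarith) le_rfl)
  -- the γ₀ part
  obtain ⟨γ₀, hA0, hB0, hC0⟩ := hclose_mono h₀ (k + 1) (fun j => R j.val)
    (by
      show R (0 : Fin (k + 2)).val = 0
      rw [Fin.val_zero]
      exact Subtype.ext (by rw [hRval, hT0]; norm_num))
    (by
      show R (Fin.last (k + 1)).val = 1
      exact Subtype.ext (by
        rw [hRval]
        show min (2 * (T (k+1) : ℝ)) 1 = 1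
        rw [min_eq_right (by linarith)]))
    (fun i j hij => hRmono (Fin.le_def.mp hij))
    (fun j => U ⟨j.val, by omega⟩) (fun j => hUo _)
    (fun j => by
      rintro x ⟨y, hy, rfl⟩
      simp only [Fin.coe_castSucc, Fin.val_succ] at hy
      have hy1 : (R j.val : ℝ) ≤ y := Subtype.coe_le_coe.mpr hy.1
      have hy2 : (y : ℝ) ≤ R (j.val + 1) := Subtype.coe_le_coe.mpr hy.2
      have hj : j.val ≤ k := Nat.lt_succ_iff.mp j.isLt
      have hRj : (R j.val : ℝ) = 2 * T j.val := by
        rw [hRval]; exact min_eq_left (by have := hTlow j.val hj; linarith)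
      have hup : (y : ℝ) / 2 ≤ (T (j.val + 1) : ℝ) := by
        rcases eq_or_lt_of_le hj with hjk | hjk
        · have h5 := hThigh (j.val + 1) (by omega)
          have := y.2.2; linarith
        · have h5 : (R (j.val + 1) : ℝ) = 2 * T (j.val + 1) := by
            rw [hRval]; exact min_eq_left (by have := hTlow (j.val + 1) (by omega); linarith)
          rw [h5] at hy2; linarith
      have hlo : (T j.val : ℝ) ≤ (y : ℝ) / 2 := by rw [hRj] at hy1; linarith
      set z : I := ⟨(y : ℝ) / 2,
        Set.mem_Icc.mpr ⟨by have := y.2.1; linarith, by have := y.2.2; linarith⟩⟩ with hz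
      have hgz : g₀ y = (g₀.trans g₁) z :=
        (trans_eval_left g₀ g₁ z y (show 2 * ((y:ℝ)/2) = (y:ℝ) by ring)).symm
      rw [hgz]
      refine hgU ⟨j.val, by omega⟩ ⟨z, Set.mem_Icc.mpr ⟨?_, ?_⟩, rfl⟩
      · exact Subtype.coe_le_coe.mp (by
          rw [show ((⟨j.val, by omega⟩ : Fin (m+1)).castSucc) = (⟨j.val, by omega⟩ : Fin (m+2)) from rfl,
            hTt ⟨j.val, by omega⟩]
          exact hlo)
      · exact Subtype.coe_le_coe.mp (by
          rw [show ((⟨j.val, by omega⟩ : Fin (m+1)).succ) = (⟨j.val + 1, by omega⟩ : Fin (m+2)) from rfl,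
            hTt ⟨j.val + 1, by omega⟩]
          exact hup))
  -- the γ₁ part
  obtain ⟨γ₁, hA1, hB1, hC1⟩ := hclose_mono h₁ (m + 1 - k) (fun j => Q j.val)
    (by
      show Q (0 : Fin (m + 1 - k + 1)).val = 0
      rw [Fin.val_zero]
      exact Subtype.ext (by
        rw [hQval]
        show max (2 * (T (k + 0) : ℝ) - 1) 0 = ((0:I):ℝ)
        rw [max_eq_right (by have := hTlow (k + 0) (by omega); linarith)]
        rfl))
    (by
      show Q (Fin.last (m + 1 - k)).val = 1
      exact Subtype.ext (by
        rw [hQval]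
        show max (2 * (T (k + (m + 1 - k)) : ℝ) - 1) 0 = ((1:I):ℝ)
        rw [hTl (k + (m + 1 - k)) (by omega)]
        norm_num))
    (fun i j hij => hQmono (Fin.le_def.mp hij))
    (fun j => U ⟨k + j.val, by omega⟩) (fun j => hUo _)
    (fun j => by
      rintro x ⟨y, hy, rfl⟩
      simp only [Fin.coe_castSucc, Fin.val_succ] at hy
      have hy1 : (Q j.val : ℝ) ≤ y := Subtype.coe_le_coe.mpr hy.1
      have hy2 : (y : ℝ) ≤ Q (j.val + 1) := Subtype.coe_le_coe.mpr hy.2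
      have hj : j.val < m + 1 - k := j.isLt
      have hQup : (Q (j.val + 1) : ℝ) = 2 * T (k + (j.val + 1)) - 1 := by
        rw [hQval]
        exact max_eq_left (by have := hThigh (k + (j.val + 1)) (by omega); linarith)
      have hup : (y : ℝ) ≤ 2 * (T (k + j.val + 1) : ℝ) - 1 := by
        rw [hQup] at hy2
        rwa [show k + (j.val + 1) = k + j.val + 1 from rfl] at hy2
      have hlo : 2 * (T (k + j.val) : ℝ) - 1 ≤ y :=
        le_trans (by rw [hQval] at hy1; exact le_trans (le_max_left _ _) hy1) le_rfl
      set z : I := ⟨((y : ℝ) + 1) / 2,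
        Set.mem_Icc.mpr ⟨by have := y.2.1; linarith, by have := y.2.2; linarith⟩⟩ with hz
      have hgz : g₁ y = (g₀.trans g₁) z :=
        (trans_eval_right g₀ g₁ z y (show 2 * (((y:ℝ) + 1)/2) - 1 = (y:ℝ) by ring)).symm
      rw [hgz]
      refine hgU ⟨k + j.val, by omega⟩ ⟨z, Set.mem_Icc.mpr ⟨?_, ?_⟩, rfl⟩
      · exact Subtype.coe_le_coe.mp (by
          rw [show ((⟨k + j.val, by omega⟩ : Fin (m+1)).castSucc) = (⟨k + j.val, by omega⟩ : Fin (m+2)) from rfl,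
            hTt ⟨k + j.val, by omega⟩]
          show (T (k + j.val) : ℝ) ≤ ((y:ℝ) + 1)/2
          linarith)
      · exact Subtype.coe_le_coe.mp (by
          rw [show ((⟨k + j.val, by omega⟩ : Fin (m+1)).succ) = (⟨k + j.val + 1, by omega⟩ : Fin (m+2)) from rfl,
            hTt ⟨k + j.val + 1, by omega⟩]
          show (((y:ℝ) + 1)/2) ≤ (T (k + j.val + 1) : ℝ)
          linarith))
  refine ⟨γ₀.trans γ₁, ?_, ?_, Path.Homotopic.hcomp hC0 hC1⟩
  · intro i
    rintro x ⟨y, hy, rfl⟩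
    have e1 : t i.castSucc = T i.val := hTt i.castSucc
    have e2 : t i.succ = T (i.val + 1) := hTt i.succ
    have hy1 : (T i.val : ℝ) ≤ y := by
      have := Subtype.coe_le_coe.mpr hy.1; rwa [e1] at this
    have hy2 : (y : ℝ) ≤ T (i.val + 1) := by
      have := Subtype.coe_le_coe.mpr hy.2; rwa [e2] at this
    have him : i.val ≤ m := Nat.lt_succ_iff.mp i.isLt
    rw [Path.trans_apply]
    split_ifs with hc
    · by_cases hik : i.val ≤ k
      · refine hA0 ⟨i.val, by omega⟩ ⟨_, Set.mem_Icc.mpr ⟨?_, ?_⟩, rfl⟩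
        · exact Subtype.coe_le_coe.mp (by
            show (R i.val : ℝ) ≤ 2 * (y : ℝ)
            rw [hRval]
            exact le_trans (min_le_left _ _) (by linarith))
        · exact Subtype.coe_le_coe.mp (by
            show 2 * (y : ℝ) ≤ (R (i.val + 1) : ℝ)
            rw [hRval]
            exact le_min (by linarith) (by linarith))
      · have h5 : (1/2 : ℝ) ≤ T i.val := hThigh i.val (by omega)
        have hy12 : (y : ℝ) = 1/2 := le_antisymm hc (by linarith)
        have hT12 : (T i.val : ℝ) = 1/2 := le_antisymm (by linarith) h5
        have hival : i.val = k + 1 := by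
          by_contra hcon
          have h6 := hTsm (show k + 1 < i.val by omega) (by omega)
          have h7 := Subtype.coe_lt_coe.mpr h6
          linarith
        have hz1 : ∀ pf, (⟨2 * (y:ℝ), pf⟩ : I) = 1 := fun pf =>
          Subtype.ext (by show 2 * (y:ℝ) = ((1:I):ℝ); rw [hy12]; norm_num)
        rw [hz1, γ₀.target]
        have hQ1 : (Q 1 : ℝ) = 0 := by
          rw [hQval]
          refine max_eq_right ?_
          have h8 : (T (k+1) : ℝ) = 1/2 := by rw [← hival]; exact hT12
          linarith
        have h1lt : 1 < m + 1 - k := by omega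
        have hieq : i = ⟨k + 1, by omega⟩ := Fin.ext hival
        rw [hieq]
        refine hA1 ⟨1, h1lt⟩ ⟨0, Set.mem_Icc.mpr ⟨?_, ?_⟩, γ₁.source⟩
        · exact Subtype.coe_le_coe.mp (by show (Q 1 : ℝ) ≤ ((0:I):ℝ); rw [hQ1]; norm_num)
        · exact nonneg'
    · have hc' : (1/2 : ℝ) < y := not_le.mp hc
      have hik : k ≤ i.val := by
        by_contra hcon
        have := hTlow (i.val + 1) (by omega)
        linarith
      obtain ⟨j, hkj⟩ : ∃ j, i.val = k + j := ⟨i.val - k, by omega⟩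
      have hjlt : j < m + 1 - k := by omega
      have hieq : i = ⟨k + j, by omega⟩ := Fin.ext hkj
      rw [hieq]
      refine hA1 ⟨j, hjlt⟩ ⟨_, Set.mem_Icc.mpr ⟨?_, ?_⟩, rfl⟩
      · exact Subtype.coe_le_coe.mp (by
          show (Q j : ℝ) ≤ 2 * (y:ℝ) - 1
          rw [hQval]
          refine max_le ?_ (by linarith)
          have h9 : (T (k + j) : ℝ) ≤ y := by rw [← hkj]; exact hy1
          linarith)
      · exact Subtype.coe_le_coe.mp (by
          show 2 * (y:ℝ) - 1 ≤ (Q (j + 1) : ℝ)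
          rw [hQval]
          refine le_trans ?_ (le_max_left _ _)
          have h9 : (y:ℝ) ≤ T (k + (j + 1)) := by
            rw [show k + (j + 1) = k + j + 1 from rfl, ← hkj]
            exact hy2
          linarith)
  · intro i
    have hiv : i.val ≤ m + 1 := Nat.lt_succ_iff.mp i.isLt
    have eT : t i = T i.val := hTt i
    have eTc : (t i : ℝ) = (T i.val : ℝ) := congrArg Subtype.val eT
    by_cases hc : (t i : ℝ) ≤ 1/2
    · have hile : i.val ≤ k + 1 := by
        by_contra hcon
        have h5 := Subtype.coe_lt_coe.mpr (hTsm (show k + 1 < i.val by omega) hiv)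
        linarith
      have hReq : (R i.val : ℝ) = 2 * (t i : ℝ) := by
        rw [hRval, eTc]
        exact min_eq_left (by linarith [eTc ▸ hc])
      calc (γ₀.trans γ₁) (t i) = γ₀ (R i.val) :=
            trans_eval_left γ₀ γ₁ (t i) (R i.val) hReq.symm
        _ = g₀ (R i.val) := hB0 ⟨i.val, by omega⟩
        _ = (g₀.trans g₁) (t i) := (trans_eval_left g₀ g₁ (t i) (R i.val) hReq.symm).symm
    · have hc' : (1/2 : ℝ) < t i := not_le.mp hc
      have hige : k + 1 ≤ i.val := by
        by_contra hcon
        have := hTlow i.val (by omega)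
        linarith
      obtain ⟨j, hkj⟩ : ∃ j, i.val = k + j := ⟨i.val - k, by omega⟩
      have hQj : (Q j : ℝ) = 2 * (t i : ℝ) - 1 := by
        rw [hQval, ← hkj, ← eTc]
        exact max_eq_left (by linarith)
      calc (γ₀.trans γ₁) (t i) = γ₁ (Q j) :=
            trans_eval_right γ₀ γ₁ (t i) (Q j) hQj.symm
        _ = g₁ (Q j) := hB1 ⟨j, by omega⟩
        _ = (g₀.trans g₁) (t i) := (trans_eval_right g₀ g₁ (t i) (Q j) hQj.symm).symm

/-- homotopical closeness is preserved by concatenation and reversal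
of paths. -/
theorem stmt2 {a b c : X} (f₀ g₀ : Path a b) (f₁ g₁ : Path b c)
    (h₀ : HClose f₀ g₀) (h₁ : HClose f₁ g₁) :
    HClose (f₀.trans f₁) (g₀.trans g₁) ∧ HClose f₀.symm g₀.symm :=
  ⟨hclose_trans h₀ h₁, hclose_symm h₀⟩
end
end

section
/- Let X be a topological space, let x ∈ X, and let f, g be paths in X with f(0) = g(0) = x and f(1) = g(1). If f is homotopically close to g rel ∂I, then the class [f * g⁻¹] belongs to the Spanier group π₁^sp(X, x). -/
open unitInterval

noncomputable section

attribute [local instance] Path.Homotopic.setoid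

variable {X Y : Type*} [TopologicalSpace X] [TopologicalSpace Y]

section StmtThreeAux

open CategoryTheory

lemma I_coe_min (a b : I) : ((min a b : I) : ℝ) = min (a:ℝ) (b:ℝ) := by
  rcases le_total a b with h | h
  · rw [min_eq_left h, min_eq_left (Subtype.coe_le_coe.2 h)]
  · rw [min_eq_right h, min_eq_right (Subtype.coe_le_coe.2 h)]

lemma I_coe_max (a b : I) : ((max a b : I) : ℝ) = max (a:ℝ) (b:ℝ) := by
  rcases le_total a b with h | h
  · rw [max_eq_right h, max_eq_right (Subtype.coe_le_coe.2 h)]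
  · rw [max_eq_left h, max_eq_left (Subtype.coe_le_coe.2 h)]

/-- first part of a path up to time `s`, constant afterwards -/
def pfst {x z : X} (γ : Path x z) (s : I) : Path x (γ s) where
  toFun r := γ (min r s)
  continuous_toFun := γ.continuous.comp (by continuity)
  source' := by show γ (min 0 s) = x; rw [min_eq_left nonneg', γ.source]
  target' := by show γ (min 1 s) = γ s; rw [min_eq_right le_one']

/-- second part of a path from time `s` on -/
def psnd {x z : X} (γ : Path x z) (s : I) : Path (γ s) z where
  toFun r := γ (max r s)
  continuous_toFun := γ.continuous.comp (by continuity)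
  source' := by show γ (max 0 s) = γ s; rw [max_eq_right nonneg']
  target' := by show γ (max 1 s) = z; rw [max_eq_left le_one', γ.target]

@[simp] lemma pfst_apply {x z : X} (γ : Path x z) (s r : I) : pfst γ s r = γ (min r s) := rfl
@[simp] lemma psnd_apply {x z : X} (γ : Path x z) (s r : I) : psnd γ s r = γ (max r s) := rfl

/-- reparametrisation realising the splitting -/
def phi (s : I) : I → I := fun r =>
  max (min (Set.projIcc 0 1 zero_le_one (2*(r:ℝ))) s) (Set.projIcc 0 1 zero_le_one (2*(r:ℝ)-1))

lemma phi_continuous (s : I) : Continuous (phi s) := by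
  unfold phi
  have h1 : Continuous fun r : I => Set.projIcc 0 1 zero_le_one (2*(r:ℝ)) :=
    continuous_projIcc.comp (continuous_const.mul continuous_subtype_val)
  have h2 : Continuous fun r : I => Set.projIcc 0 1 zero_le_one (2*(r:ℝ)-1) :=
    continuous_projIcc.comp ((continuous_const.mul continuous_subtype_val).sub continuous_const)
  exact (h1.min continuous_const).max h2

lemma phi_zero (s : I) : phi s 0 = 0 := by
  apply Subtype.ext
  rw [phi, I_coe_max, I_coe_min, Set.coe_projIcc, Set.coe_projIcc]
  norm_num [s.2.1]

lemma phi_one (s : I) : phi s 1 = 1 := by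
  apply Subtype.ext
  rw [phi, I_coe_max, I_coe_min, Set.coe_projIcc, Set.coe_projIcc]
  norm_num [s.2.2]

lemma split_eq {x z : X} (γ : Path x z) (s : I) :
    (pfst γ s).trans (psnd γ s) = γ.reparam (phi s) (phi_continuous s) (phi_zero s) (phi_one s) := by
  ext r
  rw [Path.trans_apply]
  show _ = γ (phi s r)
  split_ifs with h
  · show γ (min _ s) = _
    congr 1
    apply Subtype.ext
    rw [I_coe_min, phi, I_coe_max, I_coe_min, Set.coe_projIcc, Set.coe_projIcc]
    have h0 : (0:ℝ) ≤ 2*(r:ℝ) := by have := r.2.1; linarith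
    have h2 : 2*(r:ℝ) ≤ 1 := by linarith
    rw [min_eq_right h2, max_eq_right h0, min_eq_right (by linarith : 2*(r:ℝ)-1 ≤ 1),
      max_eq_left (by linarith : 2*(r:ℝ)-1 ≤ 0)]
    exact (max_eq_left (le_min h0 s.2.1)).symm
  · show γ (max _ s) = _
    congr 1
    apply Subtype.ext
    push_neg at h
    rw [I_coe_max, phi, I_coe_max, I_coe_min, Set.coe_projIcc, Set.coe_projIcc]
    have h2 : (1:ℝ) ≤ 2*(r:ℝ) := by linarith
    have h3 : 2*(r:ℝ)-1 ≤ 1 := by have := r.2.2; linarith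
    rw [min_eq_left h2, max_eq_right zero_le_one, min_eq_right h3,
      max_eq_right (by linarith : (0:ℝ) ≤ 2*(r:ℝ)-1), min_eq_right s.2.2]
    exact max_comm _ _

lemma quot_split {x z : X} (γ : Path x z) (s : I) :
    (⟦γ⟧ : Path.Homotopic.Quotient x z) = ⟦(pfst γ s).trans (psnd γ s)⟧ := by
  rw [split_eq]
  exact Quotient.sound ⟨Path.Homotopy.reparam γ (phi s) (phi_continuous s) (phi_zero s) (phi_one s)⟩

lemma quot_trans {a b c : X} (p : Path a b) (q : Path b c) :
    (⟦p.trans q⟧ : Path.Homotopic.Quotient a c) =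
    CategoryStruct.comp (obj := FundamentalGroupoid X)
      (X := FundamentalGroupoid.mk a) (Y := FundamentalGroupoid.mk b)
      (Z := FundamentalGroupoid.mk c) ⟦p⟧ ⟦q⟧ :=
  rfl

lemma quot_symm {a b : X} (p : Path a b) :
    (⟦p.symm⟧ : Path.Homotopic.Quotient b a) =
    Groupoid.inv (X := FundamentalGroupoid.mk a) (Y := FundamentalGroupoid.mk b) ⟦p⟧ := rfl

lemma pathClass_congr {x : X} {p q : Path x x}
    (h : (⟦p⟧ : Path.Homotopic.Quotient x x) = ⟦q⟧) : pathClass p = pathClass q := by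
  unfold pathClass; rw [h]

lemma pathClass_trans {x : X} (p q : Path x x) :
    pathClass (p.trans q) = pathClass q * pathClass p := by
  show (⟦p.trans q⟧ : Path.Homotopic.Quotient x x) = _
  rw [quot_trans]
  rfl

lemma decomp {x z' z : X} (γ₁ g₁ : Path x z') (c b : Path z' z) :
    (⟦(γ₁.trans c).trans ((g₁.trans b).symm)⟧ : Path.Homotopic.Quotient x x) =
    ⟦(γ₁.trans g₁.symm).trans ((g₁.trans (c.trans b.symm)).trans g₁.symm)⟧ := by
  simp only [quot_trans, quot_symm]
  simp [Groupoid.inv_eq_inv]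
  rfl

lemma helper {x : X} (𝒰 : Set (Set X)) (n : ℕ) :
    ∀ (z : X) (γ g : Path x z) (t : Fin (n + 1) → I), t 0 = 0 → t (Fin.last n) = 1 →
    Monotone t → ∀ U : Fin n → Set X, (∀ i, U i ∈ 𝒰) →
    (∀ i : Fin n, γ '' Set.Icc (t i.castSucc) (t i.succ) ⊆ U i) →
    (∀ i : Fin n, g '' Set.Icc (t i.castSucc) (t i.succ) ⊆ U i) →
    (∀ i : Fin (n + 1), γ (t i) = g (t i)) →
    pathClass (γ.trans g.symm) ∈ spanierCover x 𝒰 := by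
  induction n with
  | zero =>
    intro z γ g t h0 h1 _ _ _ _ _ _
    exact absurd (h0.symm.trans h1) (by
      intro hh
      simpa using congrArg Subtype.val hh)
  | succ n ih =>
    intro z γ g t h0 h1 hmono U hU hγU hgU hpt
    rcases Nat.eq_zero_or_pos n with hn | hn
    · -- single subinterval : the loop is itself (conjugated by a constant path) a generator
      subst hn
      have hIcc : Set.Icc (t (0:Fin 1).castSucc) (t (0:Fin 1).succ) = Set.univ := by
        have e0 : t (0:Fin 1).castSucc = 0 := by
          rw [show (0:Fin 1).castSucc = (0 : Fin 2) from rfl, h0]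
        have e1 : t (0:Fin 1).succ = 1 := by
          rw [show (0:Fin 1).succ = Fin.last 1 from rfl, h1]
        rw [e0, e1]
        ext r
        simp [nonneg', le_one']
      have hrange : Set.range (γ.trans g.symm) ⊆ U 0 := by
        rw [Path.trans_range, Path.symm_range]
        apply Set.union_subset
        · rw [← Set.image_univ, ← hIcc]; exact hγU 0
        · rw [← Set.image_univ, ← hIcc]; exact hgU 0
      apply Subgroup.subset_closure
      refine ⟨x, Path.refl x, γ.trans g.symm, U 0, hU 0, hrange, ?_⟩
      apply pathClass_congr
      have hid : (⟦Path.refl x⟧ : Path.Homotopic.Quotient x x) = 𝟙 (FundamentalGroupoid.mk x) :=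
        rfl
      simp only [quot_trans, quot_symm, hid]
      simp [Groupoid.inv_eq_inv]
      rfl
    · -- at least two subintervals
      set s := t ((Fin.last n).castSucc) with hsdef
      have hgs : γ s = g s := hpt ((Fin.last n).castSucc)
      set γ₁ : Path x (γ s) := pfst γ s with hγ₁def
      set c : Path (γ s) z := psnd γ s with hcdef
      set g₁ : Path x (γ s) := (pfst g s).cast rfl hgs with hg₁def
      set b : Path (γ s) z := (psnd g s).cast hgs rfl with hbdef
      have hg₁app : ∀ r, g₁ r = g (min r s) := fun r => rfl
      have hbapp : ∀ r, b r = g (max r s) := fun r => rfl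
      -- splitting of γ and g
      have hsplitγ : (⟦γ⟧ : Path.Homotopic.Quotient x z) = ⟦γ₁.trans c⟧ := quot_split γ s
      have hsplitg : (⟦g⟧ : Path.Homotopic.Quotient x z) = ⟦g₁.trans b⟧ := by
        rw [quot_split g s]
        have : (pfst g s).trans (psnd g s) = g₁.trans b := by
          ext r
          rw [Path.trans_apply, Path.trans_apply]
          split_ifs <;> rfl
        rw [this]
      -- the partition for the restricted paths
      set t' : Fin (n + 1) → I := fun j => if j = Fin.last n then 1 else t j.castSucc with ht'def
      have hlast_ne : ∀ i : Fin n, i.castSucc ≠ Fin.last n := fun i => (Fin.castSucc_lt_last i).ne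
      have ht'0 : t' 0 = 0 := by
        have h00 : (0 : Fin (n+1)) ≠ Fin.last n := by
          intro hh
          exact absurd (congrArg Fin.val hh) (by simpa using hn.ne)
        simp only [ht'def]
        rw [if_neg h00, Fin.castSucc_zero, h0]
      have ht'last : t' (Fin.last n) = 1 := if_pos rfl
      have ht'le : ∀ j : Fin (n+1), t' j ≤ 1 := fun j => le_one'
      have ht'val : ∀ i : Fin n, t' i.castSucc = t i.castSucc.castSucc := fun i =>
        if_neg (hlast_ne i)
      have ht'mono : Monotone t' := by
        intro i j hij
        by_cases hj : j = Fin.last n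
        · rw [hj, ht'last]; exact le_one'
        · have hi : i ≠ Fin.last n := by
            intro hi
            exact hj (le_antisymm (Fin.le_last j) (hi ▸ hij))
          simp only [ht'def]
          rw [if_neg hi, if_neg hj]
          exact hmono (Fin.castSucc_le_castSucc_iff.2 hij)
      -- bounds
      have hcast_le_s : ∀ j : Fin (n+1), t j.castSucc ≤ s :=
        fun j => hmono (Fin.castSucc_le_castSucc_iff.2 (Fin.le_last j))
      -- images of the restricted paths
      have himg : ∀ (p : Path x z) (hp : ∀ i : Fin (n+1),
            p '' Set.Icc (t i.castSucc) (t i.succ) ⊆ U i) (i : Fin n) (r : I),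
          r ∈ Set.Icc (t' i.castSucc) (t' i.succ) → p (min r s) ∈ U i.castSucc := by
        intro p hp i r hr
        apply hp i.castSucc
        refine ⟨min r s, ⟨?_, ?_⟩, rfl⟩
        · refine le_min ?_ (hcast_le_s i.castSucc)
          rw [← ht'val i]
          exact hr.1
        · by_cases hi : i.succ = Fin.last n
          · have : t i.castSucc.succ = s := by
              rw [Fin.succ_castSucc, hi]
            rw [this]
            exact min_le_right _ _
          · have : t' i.succ = t i.castSucc.succ := by
              rw [ht'def]; simp only; rw [if_neg hi, Fin.succ_castSucc]
            exact le_trans (min_le_left _ _) (this ▸ hr.2)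
      have hγ₁U : ∀ i : Fin n, γ₁ '' Set.Icc (t' i.castSucc) (t' i.succ) ⊆ U i.castSucc := by
        rintro i y ⟨r, hr, rfl⟩
        exact himg γ hγU i r hr
      have hg₁U : ∀ i : Fin n, g₁ '' Set.Icc (t' i.castSucc) (t' i.succ) ⊆ U i.castSucc := by
        rintro i y ⟨r, hr, rfl⟩
        rw [hg₁app]
        exact himg g hgU i r hr
      -- agreement at partition points
      have hpt' : ∀ i : Fin (n + 1), γ₁ (t' i) = g₁ (t' i) := by
        intro i
        rw [hg₁app]
        show γ (min (t' i) s) = g (min (t' i) s)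
        by_cases hi : i = Fin.last n
        · rw [hi, ht'last, min_eq_right le_one']
          exact hgs
        · have : t' i = t i.castSucc := by simp only [ht'def]; rw [if_neg hi]
          rw [this, min_eq_left (hcast_le_s i)]
          exact hpt i.castSucc
      -- the inner part is in the Spanier group by induction
      have hL1 : pathClass (γ₁.trans g₁.symm) ∈ spanierCover x 𝒰 :=
        ih (γ s) γ₁ g₁ t' ht'0 ht'last ht'mono (fun i => U i.castSucc)
          (fun i => hU i.castSucc) hγ₁U hg₁U hpt'
      -- the outer part is a generator
      have hmax_mem : ∀ r : I, max r s ∈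
          Set.Icc (t (Fin.last n).castSucc) (t (Fin.last n).succ) := by
        intro r
        refine ⟨le_max_right _ _, ?_⟩
        have : t (Fin.last n).succ = 1 := by rw [Fin.succ_last, h1]
        rw [this]
        exact le_one'
      have hL2 : pathClass ((g₁.trans (c.trans b.symm)).trans g₁.symm) ∈ spanierCover x 𝒰 := by
        apply Subgroup.subset_closure
        refine ⟨γ s, g₁, c.trans b.symm, U (Fin.last n), hU _, ?_, rfl⟩
        rw [Path.trans_range, Path.symm_range]
        apply Set.union_subset
        · rintro y ⟨r, rfl⟩
          exact hγU (Fin.last n) ⟨max r s, hmax_mem r, rfl⟩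
        · rintro y ⟨r, rfl⟩
          rw [hbapp]
          exact hgU (Fin.last n) ⟨max r s, hmax_mem r, rfl⟩
      -- assembling
      have hq : (⟦γ.trans g.symm⟧ : Path.Homotopic.Quotient x x) =
          ⟦(γ₁.trans g₁.symm).trans ((g₁.trans (c.trans b.symm)).trans g₁.symm)⟧ := by
        rw [← decomp]
        simp only [quot_trans, quot_symm, hsplitγ, hsplitg]
        rfl
      rw [pathClass_congr hq, pathClass_trans]
      exact mul_mem hL2 hL1

end StmtThreeAux


/-- if `f` is homotopically close to `g` rel `∂I`, then `[f * g⁻¹]`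
belongs to the Spanier group `π₁^sp(X, x)`. -/
theorem stmt3 {x z : X} (f g : Path x z) (h : HClose f g) :
    pathClass (f.trans g.symm) ∈ spanierGroup x := by
  simp only [spanierGroup, Subgroup.mem_iInf]
  intro 𝒰 hopen hcover
  -- a Lebesgue number for the cover pulled back along `g`
  have hcov' : (Set.univ : Set I) ⊆ ⋃ V : 𝒰, g ⁻¹' (V : Set X) := by
    intro r _
    have : g r ∈ ⋃₀ 𝒰 := by rw [hcover]; trivial
    rcases this with ⟨V, hV, hgV⟩
    exact Set.mem_iUnion.2 ⟨⟨V, hV⟩, hgV⟩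
  obtain ⟨δ, δpos, hball⟩ := lebesgue_number_lemma_of_metric isCompact_univ
    (fun V : 𝒰 => (hopen V V.2).preimage g.continuous) hcov'
  obtain ⟨n, hn⟩ := exists_nat_one_div_lt δpos
  have hNpos : (0:ℝ) < (n:ℝ) + 1 := by positivity
  -- the uniform partition with `n + 1` subintervals
  set t : Fin (n + 2) → I := fun i =>
    ⟨(i : ℕ) / ((n : ℝ) + 1), by
      constructor
      · positivity
      · rw [div_le_one hNpos]
        exact_mod_cast i.is_le⟩ with htdef
  have ht0 : t 0 = 0 := by
    apply Subtype.ext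
    simp [htdef]
  have htl : t (Fin.last (n+1)) = 1 := by
    apply Subtype.ext
    show ((Fin.last (n+1) : Fin (n+2)) : ℕ) / ((n : ℝ) + 1) = 1
    rw [Fin.val_last]
    push_cast
    rw [div_self hNpos.ne']
  have hstrict : StrictMono t := by
    intro i j hij
    show ((i : ℕ) : ℝ) / ((n : ℝ) + 1) < ((j : ℕ) : ℝ) / ((n : ℝ) + 1)
    have hcast : ((i : ℕ) : ℝ) < ((j : ℕ) : ℝ) := by exact_mod_cast hij
    exact div_lt_div_of_pos_right hcast hNpos
  choose V hV using fun i : Fin (n+1) => hball (t i.castSucc) trivial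
  have hseg : ∀ i : Fin (n+1),
      Set.Icc (t i.castSucc) (t i.succ) ⊆ Metric.ball (t i.castSucc) δ := by
    intro i r hr
    have h1 : ((t i.castSucc : I) : ℝ) ≤ r := hr.1
    have h2 : (r : ℝ) ≤ ((t i.succ : I) : ℝ) := hr.2
    have hvals : ((t i.succ : I) : ℝ) - ((t i.castSucc : I) : ℝ) = 1 / ((n:ℝ)+1) := by
      show ((i.succ : ℕ) : ℝ) / ((n : ℝ) + 1) - ((i.castSucc : ℕ) : ℝ) / ((n : ℝ) + 1) = _
      rw [Fin.val_succ, Fin.coe_castSucc]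
      push_cast
      ring
    rw [Metric.mem_ball, Subtype.dist_eq, Real.dist_eq,
      abs_of_nonneg (by linarith : (0:ℝ) ≤ (r : ℝ) - ((t i.castSucc : I) : ℝ))]
    linarith
  have hgU : ∀ i : Fin (n+1), g '' Set.Icc (t i.castSucc) (t i.succ) ⊆ (V i : Set X) := by
    rintro i y ⟨r, hr, rfl⟩
    exact hV i (hseg i hr)
  obtain ⟨γ, hγU, hγpt, hγf⟩ := h (n+1) t ht0 htl hstrict (fun i => (V i : Set X))
    (fun i => hopen _ (V i).2) hgU
  have heq : pathClass (f.trans g.symm) = pathClass (γ.trans g.symm) := by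
    apply pathClass_congr
    rw [quot_trans, quot_trans,
      show (⟦γ⟧ : Path.Homotopic.Quotient x z) = ⟦f⟧ from Quotient.sound hγf]
  rw [heq]
  exact helper 𝒰 (n+1) z γ g t ht0 htl hstrict.monotone _ (fun i => (V i).2) hγU hgU hγpt
end
end

section
/- Let X be a topological space, x ∈ X, and let f, g be paths in X with f(0) = g(0) = x and f(1) = g(1). If f is homotopically close to g rel ∂I, then [f * g⁻¹] belongs to the quasi-small loop group π₁^qs(X, x). -/
open unitInterval

noncomputable section

attribute [local instance] Path.Homotopic.setoid

variable {X Y : Type*} [TopologicalSpace X] [TopologicalSpace Y]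

lemma hclose_trans_right {x z : X} (f g : Path x z) (h : HClose f g) :
    HClose (f.trans g.symm) (g.trans g.symm) := by
  intro n t ht0 ht1 htmono U hUopen hUsub
  classical
  -- the set of indices where t is below 1/2
  set F : Finset (Fin (n + 1)) := Finset.univ.filter (fun i => (t i : ℝ) < 1 / 2) with hF
  have hF0 : (0 : Fin (n + 1)) ∈ F := by
    rw [hF]
    refine Finset.mem_filter.2 ⟨Finset.mem_univ _, ?_⟩
    rw [ht0]
    norm_num
  set m : Fin (n + 1) := F.max' ⟨0, hF0⟩ with hmdef
  have hm : (t m : ℝ) < 1 / 2 :=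
    (Finset.mem_filter.1 (F.max'_mem ⟨0, hF0⟩)).2
  have hmax : ∀ i : Fin (n + 1), (t i : ℝ) < 1 / 2 → i ≤ m := by
    intro i hi
    exact F.le_max' i (by rw [hF]; exact Finset.mem_filter.2 ⟨Finset.mem_univ _, hi⟩)
  have hmlt : (m : ℕ) < n := by
    have h1 : t m < t (Fin.last n) := by
      rw [ht1, ← Subtype.coe_lt_coe, Set.Icc.coe_one]
      linarith
    have := htmono.lt_iff_lt.1 h1
    simpa [Fin.lt_def] using this
  set M : ℕ := (m : ℕ) with hMdef
  have hM1 : M + 1 ≤ n := hmlt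
  -- the doubled partition on the first half
  have hemb : ∀ j : Fin (M + 2), (j : ℕ) < n + 1 := fun j => by omega
  set t' : Fin (M + 2) → I := fun j => t ⟨j, hemb j⟩ with ht'
  have hlt : ∀ j : Fin (M + 2), (j : ℕ) ≤ M → (t' j : ℝ) < 1 / 2 := by
    intro j hj
    have hle : t ⟨j, hemb j⟩ ≤ t m := htmono.monotone (by simp [Fin.le_def]; exact hj)
    exact lt_of_le_of_lt hle hm
  have hhalf : (1 / 2 : ℝ) ≤ (t' (Fin.last (M + 1)) : ℝ) := by
    by_contra hc
    push_neg at hc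
    have := hmax _ hc
    simp [Fin.le_def] at this
    exact lt_irrefl _ this
  have hsmem : ∀ j : Fin (M + 2), min (2 * (t' j : ℝ)) 1 ∈ I := by
    intro j
    constructor
    · exact le_min (by have := (t' j).2.1; linarith) zero_le_one
    · exact min_le_right _ _
  set s : Fin (M + 2) → I := fun j => ⟨min (2 * (t' j : ℝ)) 1, hsmem j⟩ with hs
  have hs_eq : ∀ j : Fin (M + 2), (j : ℕ) ≤ M → (s j : ℝ) = 2 * (t' j : ℝ) := by
    intro j hj
    exact min_eq_left (by have := hlt j hj; linarith)
  have hs0 : s 0 = 0 := by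
    apply Subtype.ext
    show min (2 * (t' 0 : ℝ)) 1 = ((0 : I) : ℝ)
    have h0 : t' 0 = t 0 := rfl
    rw [h0, ht0]
    norm_num
  have hs1 : s (Fin.last (M + 1)) = 1 := by
    apply Subtype.ext
    simp only [hs]
    exact min_eq_right (by linarith [hhalf])
  have hsmono : StrictMono s := by
    intro j k hjk
    have hjk' : (j : ℕ) < (k : ℕ) := hjk
    rw [← Subtype.coe_lt_coe]
    rcases Nat.lt_or_ge (k : ℕ) (M + 1) with hk | hk
    · rw [hs_eq j (by omega), hs_eq k (by omega)]
      have : t ⟨j, hemb j⟩ < t ⟨k, hemb k⟩ := htmono (by simp [Fin.lt_def, hjk'])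
      have := Subtype.coe_lt_coe.2 this
      simp only [ht']
      linarith
    · have hkM : (k : ℕ) = M + 1 := by omega
      have hkl : k = Fin.last (M + 1) := Fin.ext hkM
      rw [hkl, hs1]
      have := hlt j (by omega)
      rw [hs_eq j (by omega), Set.Icc.coe_one]
      linarith
  set U' : Fin (M + 1) → Set X := fun j => U ⟨j, by omega⟩ with hU'
  have hU'open : ∀ j, IsOpen (U' j) := fun j => hUopen _
  have hU'sub : ∀ j : Fin (M + 1), g '' Set.Icc (s j.castSucc) (s j.succ) ⊆ U' j := by
    rintro j y ⟨v, hv, rfl⟩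
    set i : Fin n := ⟨j, by omega⟩ with hi
    have hvI : (0 : ℝ) ≤ (v : ℝ) / 2 ∧ (v : ℝ) / 2 ≤ 1 := by
      constructor
      · linarith [v.2.1]
      · linarith [v.2.2]
    set w : I := ⟨(v : ℝ) / 2, hvI.1, hvI.2⟩ with hw
    have hw2 : (w : ℝ) ≤ 1 / 2 := by
      simp only [hw]
      linarith [v.2.2]
    have hv1 : (s j.castSucc : ℝ) ≤ (v : ℝ) := hv.1
    have hv2 : (v : ℝ) ≤ (s j.succ : ℝ) := hv.2
    rw [hs_eq j.castSucc (by have := j.isLt; simp only [Fin.coe_castSucc]; omega)] at hv1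
    have hv2' : (v : ℝ) ≤ 2 * (t' (Fin.succ j) : ℝ) := le_trans hv2 (min_le_left _ _)
    have hmem : w ∈ Set.Icc (t i.castSucc) (t i.succ) := by
      constructor
      · rw [← Subtype.coe_le_coe]
        have : t i.castSucc = t' j.castSucc := by
          apply congrArg t
          apply Fin.ext
          simp [hi]
        rw [this]
        simp only [hw]
        linarith
      · rw [← Subtype.coe_le_coe]
        have : t i.succ = t' j.succ := by
          apply congrArg t
          apply Fin.ext
          simp [hi]
        rw [this]
        simp only [hw]
        linarith
    have := hUsub i ⟨w, hmem, rfl⟩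
    have heq : (g.trans g.symm) w = g v := by
      rw [Path.trans_apply, dif_pos hw2]
      apply congrArg g
      apply Subtype.ext
      simp [hw]
      ring
    rw [heq] at this
    exact this
  obtain ⟨γ₁, hγsub, hγpt, hγhom⟩ := h (M + 1) s hs0 hs1 hsmono U' hU'open hU'sub
  refine ⟨γ₁.trans g.symm, ?_, ?_, ?_⟩
  · rintro i y ⟨v, hv, rfl⟩
    have hv1 : (t i.castSucc : ℝ) ≤ (v : ℝ) := hv.1
    have hv2 : (v : ℝ) ≤ (t i.succ : ℝ) := hv.2
    by_cases hvh : (v : ℝ) ≤ 1 / 2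
    · rw [Path.trans_apply, dif_pos hvh]
      by_cases hcs : (t i.castSucc : ℝ) < 1 / 2
      · have hiM : (i : ℕ) ≤ M := by
          have := hmax i.castSucc hcs
          simpa [Fin.le_def] using this
        set j : Fin (M + 1) := ⟨i, by omega⟩ with hj
        apply hγsub j
        refine ⟨⟨2 * (v : ℝ), (mul_pos_mem_iff zero_lt_two).2 ⟨v.2.1, hvh⟩⟩, ?_, rfl⟩
        constructor
        · rw [← Subtype.coe_le_coe]
          rw [hs_eq j.castSucc (by have := j.isLt; simp only [Fin.coe_castSucc]; omega)]
          have : t' j.castSucc = t i.castSucc := by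
            apply congrArg t
            apply Fin.ext
            simp [hj]
          rw [this]
          simpa using (by linarith : 2 * (t i.castSucc : ℝ) ≤ 2 * (v : ℝ))
        · rw [← Subtype.coe_le_coe]
          have : t' j.succ = t i.succ := by
            apply congrArg t
            apply Fin.ext
            simp [hj]
          show 2 * (v : ℝ) ≤ min (2 * (t' j.succ : ℝ)) 1
          rw [this]
          exact le_min (by linarith) (by linarith)
      · push_neg at hcs
        have hveq : (v : ℝ) = 1 / 2 := le_antisymm hvh (le_trans hcs hv1)
        have h1 : (⟨2 * (v : ℝ), (mul_pos_mem_iff zero_lt_two).2 ⟨v.2.1, hvh⟩⟩ : I) = 1 := by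
          apply Subtype.ext
          show 2 * (v : ℝ) = ((1 : I) : ℝ)
          rw [hveq, Set.Icc.coe_one]
          norm_num
        rw [h1, Path.target]
        have hmem : v ∈ Set.Icc (t i.castSucc) (t i.succ) := hv
        have := hUsub i ⟨v, hmem, rfl⟩
        have heq : (g.trans g.symm) v = z := by
          rw [Path.trans_apply, dif_pos hvh]
          have : (⟨2 * (v : ℝ), (mul_pos_mem_iff zero_lt_two).2 ⟨v.2.1, hvh⟩⟩ : I) = 1 := h1
          rw [this, Path.target]
        rwa [heq] at this
    · have := hUsub i ⟨v, hv, rfl⟩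
      rw [Path.trans_apply, dif_neg hvh] at this
      rw [Path.trans_apply, dif_neg hvh]
      exact this
  · intro i
    by_cases hih : (t i : ℝ) ≤ 1 / 2
    · have hiM : (i : ℕ) ≤ M + 1 := by
        by_contra hc
        push_neg at hc
        have hlt2 : t ⟨M + 1, by omega⟩ < t i := htmono (by simp [Fin.lt_def]; omega)
        have h12 : (1 / 2 : ℝ) ≤ (t ⟨M + 1, by omega⟩ : ℝ) := by
          have : t' (Fin.last (M + 1)) = t ⟨M + 1, by omega⟩ := rfl
          rw [← this]
          exact hhalf
        have := Subtype.coe_lt_coe.2 hlt2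
        linarith
      set j : Fin (M + 2) := ⟨i, by omega⟩ with hj
      have ht'j : t' j = t i := by
        apply congrArg t
        apply Fin.ext
        simp [hj]
      rw [Path.trans_apply, dif_pos hih, Path.trans_apply, dif_pos hih]
      have hsj : (⟨2 * (t i : ℝ), (mul_pos_mem_iff zero_lt_two).2 ⟨(t i).2.1, hih⟩⟩ : I) = s j := by
        apply Subtype.ext
        show 2 * (t i : ℝ) = min (2 * (t' j : ℝ)) 1
        rw [ht'j]
        exact (min_eq_left (by linarith)).symm
      rw [hsj]
      exact hγpt j
    · rw [Path.trans_apply, dif_neg hih, Path.trans_apply, dif_neg hih]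
  · exact hγhom.hcomp (Path.Homotopic.refl g.symm)

/-- if `f` is homotopically close to `g` rel `∂I`, then `[f * g⁻¹]`
belongs to the quasi-small loop group `π₁^qs(X, x)`. -/
theorem stmt6 {x z : X} (f g : Path x z) (h : HClose f g) :
    pathClass (f.trans g.symm) ∈ qs x := by
  refine ⟨f.trans g.symm, g.trans g.symm, rfl, ?_, hclose_trans_right f g h⟩
  show pathClass (g.trans g.symm) ∈ (⊥ : Subgroup (FundamentalGroup X x))
  rw [Subgroup.mem_bot]
  have hq : (⟦g.trans g.symm⟧ : Path.Homotopic.Quotient x x) = ⟦Path.refl x⟧ :=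
    Quotient.sound ⟨(Path.Homotopy.reflTransSymm g).symm⟩
  unfold pathClass
  rw [hq]
  rfl
end
end

section
/- Let X be a topological space, x ∈ X, and let H ≤ K be subgroups of π₁(X, x). If π_H^qs(X, x) = H, then π_K^qs(X, x) = K. -/
open unitInterval

noncomputable section

attribute [local instance] Path.Homotopic.setoid

variable {X Y : Type*} [TopologicalSpace X] [TopologicalSpace Y]

section Helpers
open CategoryTheory

variable {x : X}

lemma pathClass_hom (f : Path x x) :
    FundamentalGroup.toPath (pathClass f) = (⟦f⟧ : Path.Homotopic.Quotient x x) := rfl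

lemma pathClass_eq_iff {f : Path x x} {p : FundamentalGroup X x} :
    pathClass f = p ↔ (⟦f⟧ : Path.Homotopic.Quotient x x) = FundamentalGroup.toPath p := by
  constructor
  · rintro rfl; rfl
  · intro hh
    exact hh

lemma pathClass_surjective : Function.Surjective (pathClass (x := x)) := by
  intro p
  obtain ⟨f, hf⟩ := Quotient.exists_rep (FundamentalGroup.toPath p)
  exact ⟨f, pathClass_eq_iff.2 hf⟩

lemma pathClass_homotopic {f g : Path x x} (h : f.Homotopic g) :
    pathClass f = pathClass g := by
  unfold pathClass; exact congrArg _ (Quotient.sound h)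

lemma pathClass_trans_s9 (f g : Path x x) :
    pathClass (f.trans g) = pathClass g * pathClass f := by
  rfl

lemma pathClass_refl : pathClass (Path.refl x) = 1 := by
  rfl

lemma pathClass_symm (f : Path x x) : pathClass f.symm = (pathClass f)⁻¹ := by
  apply eq_inv_of_mul_eq_one_left
  rw [← pathClass_trans_s9, ← pathClass_refl (x := x)]
  exact pathClass_homotopic ⟨(Path.Homotopy.reflTransSymm f).symm⟩

lemma hclose_refl {a b : X} (f : Path a b) : HClose f f := by
  intro n t _ _ _ U _ hcov
  exact ⟨f, hcov, fun _ => rfl, Path.Homotopic.refl f⟩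

lemma half_le_trans_apply {y z : X} (a b : Path x y) (c : Path y z) (u : I)
    (hu : (1/2 : ℝ) ≤ u) : (a.trans c) u = (b.trans c) u := by
  have key : ∀ (p : Path x y) (v : I), v = 1 → p v = y := fun p v hv => hv ▸ p.target
  rw [Path.trans_apply, Path.trans_apply]
  split_ifs with hle
  · have hu2 : (u : ℝ) = 1/2 := le_antisymm hle hu
    rw [key a _ (Subtype.ext (by show 2 * (u:ℝ) = ((1:I):ℝ); rw [Set.Icc.coe_one, hu2]; norm_num)),
      key b _ (Subtype.ext (by show 2 * (u:ℝ) = ((1:I):ℝ); rw [Set.Icc.coe_one, hu2]; norm_num))]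
  · rfl

lemma trans_apply_of_le {y z : X} (a : Path x y) (c : Path y z) {u w : I}
    (hu : (u : ℝ) ≤ 1/2) (hw : (w : ℝ) = 2 * u) : (a.trans c) u = a w := by
  rw [Path.trans_apply, dif_pos hu]
  congr 1
  exact Subtype.ext hw.symm

set_option maxHeartbeats 4000000 in
lemma hclose_key {f h : Path x x} (hc : HClose f h) :
    HClose (f.trans h.symm) (h.trans h.symm) := by
  intro n t ht0 htl hmono U hUopen hUcov
  classical
  obtain ⟨i₀, hi₀mem, hmin⟩ := Finset.exists_min_image
    (Finset.univ.filter fun i : Fin (n+1) => (1/2 : ℝ) ≤ t i) id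
    ⟨Fin.last n, Finset.mem_filter.2 ⟨Finset.mem_univ _,
      by rw [htl, Set.Icc.coe_one]; norm_num⟩⟩
  rw [Finset.mem_filter] at hi₀mem
  have hi₀ : (1/2 : ℝ) ≤ t i₀ := hi₀mem.2
  have hmin' : ∀ i : Fin (n+1), (1/2 : ℝ) ≤ t i → i₀ ≤ i := fun i hi =>
    hmin i (Finset.mem_filter.2 ⟨Finset.mem_univ _, hi⟩)
  have hi₀pos : 0 < i₀.val := by
    rcases Nat.eq_zero_or_pos i₀.val with h0 | h0
    · exfalso
      have h1 : i₀ = 0 := Fin.ext h0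
      rw [h1, ht0] at hi₀
      norm_num at hi₀
    · exact h0
  set jv := i₀.val - 1 with hjv
  have hjv1 : jv + 1 = i₀.val := by omega
  have hjvn : jv + 1 ≤ n := by have := i₀.isLt; omega
  have hlt : ∀ m (hm : m ≤ jv), (t ⟨m, by omega⟩ : ℝ) < 1/2 := by
    intro m hm
    by_contra hcon
    push_neg at hcon
    have := hmin' _ hcon
    rw [Fin.le_def] at this
    simp only at this
    omega
  have hge : (1/2 : ℝ) ≤ t ⟨jv + 1, by omega⟩ := by
    have he : (⟨jv + 1, by omega⟩ : Fin (n+1)) = i₀ := Fin.ext hjv1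
    rw [he]; exact hi₀
  obtain ⟨s, hsval, hstop⟩ :
      ∃ s : Fin (jv + 1 + 1) → I,
        (∀ (k : Fin (jv + 1 + 1)) (hk : (k : ℕ) ≤ jv),
          (s k : ℝ) = 2 * t ⟨k.val, by omega⟩) ∧
        (∀ k : Fin (jv + 1 + 1), ¬ (k : ℕ) ≤ jv → s k = 1) := by
    refine ⟨fun i =>
      if hi : (i : ℕ) ≤ jv then
        ⟨2 * (t ⟨i.val, by omega⟩ : ℝ),
          ⟨mul_nonneg (by norm_num) (t _).2.1, by linarith [hlt i.val hi]⟩⟩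
      else 1, fun k hk => ?_, fun k hk => ?_⟩
    · simp only [dif_pos hk]
    · simp only [dif_neg hk]
  have hs0 : s 0 = 0 := by
    apply Subtype.ext
    rw [Set.Icc.coe_zero, hsval 0 (Nat.zero_le _)]
    have he : (⟨(0 : Fin (jv+1+1)).val, by omega⟩ : Fin (n+1)) = 0 := Fin.ext rfl
    rw [he, ht0, Set.Icc.coe_zero, mul_zero]
  have hsl : s (Fin.last (jv + 1)) = 1 := hstop _ (by rw [Fin.val_last]; omega)
  have hsmono : StrictMono s := by
    intro a b hab
    have hav : a.val ≤ jv := by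
      have hb := b.isLt
      have := Fin.lt_def.1 hab
      omega
    rw [← Subtype.coe_lt_coe]
    by_cases hbv : b.val ≤ jv
    · rw [hsval a hav, hsval b hbv]
      have h1 : t ⟨a.val, by omega⟩ < t ⟨b.val, by omega⟩ :=
        hmono (by rw [Fin.lt_def]; exact Fin.lt_def.1 hab)
      have := Subtype.coe_lt_coe.2 h1
      linarith
    · rw [hsval a hav, hstop b hbv, Set.Icc.coe_one]
      linarith [hlt a.val hav]
  obtain ⟨V, hV⟩ : ∃ V : Fin (jv + 1) → Set X, ∀ i, V i = U ⟨i.val, by omega⟩ :=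
    ⟨fun i => U ⟨i.val, by omega⟩, fun i => rfl⟩
  have hVopen : ∀ i, IsOpen (V i) := fun i => (hV i) ▸ hUopen _
  have hVcov : ∀ i : Fin (jv + 1), h '' Set.Icc (s i.castSucc) (s i.succ) ⊆ V i := by
    rintro i y ⟨u, hu, rfl⟩
    have hicast : (i.castSucc : ℕ) ≤ jv := by
      have := i.isLt
      simp only [Fin.coe_castSucc]
      omega
    have hlb : 2 * (t ⟨i.val, by omega⟩ : ℝ) ≤ u := by
      have h1 := Subtype.coe_le_coe.2 hu.1
      rw [hsval i.castSucc hicast] at h1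
      have he : (⟨(i.castSucc : ℕ), by omega⟩ : Fin (n+1)) = ⟨i.val, by omega⟩ :=
        Fin.ext (by simp)
      rwa [he] at h1
    have hub : (u : ℝ) ≤ s i.succ := Subtype.coe_le_coe.2 hu.2
    set u' : I := ⟨(u : ℝ) / 2, ⟨div_nonneg u.2.1 (by norm_num), by linarith [u.2.2]⟩⟩ with hu'
    have hA : (h.trans h.symm) u' = h u := by
      apply trans_apply_of_le
      · show (u : ℝ) / 2 ≤ 1/2; linarith [u.2.2]
      · show (u : ℝ) = 2 * ((u : ℝ) / 2); ring
    set i' : Fin n := ⟨i.val, by omega⟩ with hi'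
    have hmem : u' ∈ Set.Icc (t i'.castSucc) (t i'.succ) := by
      constructor
      · rw [← Subtype.coe_le_coe]
        show (t i'.castSucc : ℝ) ≤ (u : ℝ) / 2
        have he : i'.castSucc = (⟨i.val, by omega⟩ : Fin (n+1)) := Fin.ext rfl
        rw [he]
        linarith
      · rw [← Subtype.coe_le_coe]
        show (u : ℝ) / 2 ≤ t i'.succ
        have hsucc : i'.succ = (⟨i.val + 1, by omega⟩ : Fin (n+1)) := Fin.ext rfl
        by_cases hcase : i.val + 1 ≤ jv
        · have h2 : (s i.succ : ℝ) = 2 * t ⟨i.val + 1, by omega⟩ := by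
            rw [hsval i.succ (by simpa using hcase)]
            congr 1
          rw [hsucc]
          rw [h2] at hub
          linarith
        · have h1 : i.val = jv := by have := i.isLt; omega
          have he2 : i'.succ = (⟨jv + 1, by omega⟩ : Fin (n+1)) := Fin.ext (by simp [hsucc, h1])
          rw [he2]
          have : (u : ℝ) ≤ 1 := u.2.2
          linarith [hge]
    rw [← hA, hV i]
    have he3 : (⟨i.val, by omega⟩ : Fin n) = i' := Fin.ext rfl
    rw [he3]
    exact hUcov i' ⟨u', hmem, rfl⟩
  obtain ⟨γ', hγ'U, hγ'pt, hγ'hom⟩ := hc (jv + 1) s hs0 hsl hsmono V hVopen hVcov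
  refine ⟨γ'.trans h.symm, ?_, ?_, Path.Homotopic.hcomp hγ'hom (Path.Homotopic.refl _)⟩
  · rintro i y ⟨u, hu, rfl⟩
    by_cases hcase : (1/2 : ℝ) ≤ u
    · rw [half_le_trans_apply γ' h h.symm u hcase]
      exact hUcov i ⟨u, hu, rfl⟩
    · push_neg at hcase
      have htc : (t i.castSucc : ℝ) ≤ u := Subtype.coe_le_coe.2 hu.1
      have hiv : i.val ≤ jv := by
        by_contra hcon
        push_neg at hcon
        have h1 : i₀ ≤ i.castSucc := by
          rw [Fin.le_def]
          simp only [Fin.coe_castSucc]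
          omega
        have := Subtype.coe_le_coe.2 (hmono.monotone h1)
        linarith
      set w : I := ⟨2 * (u : ℝ), ⟨mul_nonneg (by norm_num) u.2.1, by linarith⟩⟩ with hw
      have hwv : (w : ℝ) = 2 * u := rfl
      rw [trans_apply_of_le γ' h.symm hcase.le (w := w) rfl]
      set ii : Fin (jv + 1) := ⟨i.val, by omega⟩ with hii
      have hmem : w ∈ Set.Icc (s ii.castSucc) (s ii.succ) := by
        constructor
        · rw [← Subtype.coe_le_coe]
          rw [hsval ii.castSucc (by simpa using hiv)]
          show 2 * (t ⟨(ii.castSucc : ℕ), _⟩ : ℝ) ≤ 2 * u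
          have he : (⟨(ii.castSucc : ℕ), by omega⟩ : Fin (n+1)) = i.castSucc := Fin.ext rfl
          rw [he]
          linarith
        · rw [← Subtype.coe_le_coe]
          by_cases hcase2 : i.val + 1 ≤ jv
          · rw [hsval ii.succ (by simpa using hcase2)]
            show 2 * (u : ℝ) ≤ 2 * (t ⟨(ii.succ : ℕ), _⟩ : ℝ)
            have he : (⟨(ii.succ : ℕ), by omega⟩ : Fin (n+1)) = i.succ := Fin.ext rfl
            rw [he]
            have := Subtype.coe_le_coe.2 hu.2
            linarith
          · rw [hstop ii.succ (by simpa using hcase2), Set.Icc.coe_one]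
            linarith
      have hin : γ' w ∈ V ii := hγ'U ii ⟨w, hmem, rfl⟩
      have he : V ii = U i := by rw [hV ii]
      rwa [he] at hin
  · intro i
    by_cases hcase : (1/2 : ℝ) ≤ t i
    · exact half_le_trans_apply γ' h h.symm (t i) hcase
    · push_neg at hcase
      have hiv : i.val ≤ jv := by
        by_contra hcon
        push_neg at hcon
        have h1 : i₀ ≤ i := by rw [Fin.le_def]; omega
        have := Subtype.coe_le_coe.2 (hmono.monotone h1)
        linarith
      set ii : Fin (jv + 1 + 1) := ⟨i.val, by omega⟩ with hii
      have hsw : (s ii : ℝ) = 2 * t i := by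
        rw [hsval ii hiv]
      rw [trans_apply_of_le γ' h.symm hcase.le hsw,
        trans_apply_of_le h h.symm hcase.le hsw]
      exact hγ'pt ii

end Helpers

/-- for subgroups `H ≤ K` of `π₁(X, x)`, if `π_H^qs(X, x) = H`, then
`π_K^qs(X, x) = K`. -/
theorem stmt9 (x : X) (H K : Subgroup (FundamentalGroup X x)) (hHK : H ≤ K)
    (h : qsSet x ↑H = (H : Set (FundamentalGroup X x))) :
    qsSet x ↑K = (K : Set (FundamentalGroup X x)) := by
  apply Set.Subset.antisymm
  · rintro p ⟨f, g, rfl, hg, hcl⟩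
    have h1 : pathClass (g.trans g.symm) = 1 := by
      rw [← pathClass_refl (x := x)]
      exact pathClass_homotopic ⟨(Path.Homotopy.reflTransSymm g).symm⟩
    have key : pathClass (f.trans g.symm) ∈ qsSet x (H : Set (FundamentalGroup X x)) :=
      ⟨f.trans g.symm, g.trans g.symm, rfl, by rw [h1]; exact H.one_mem, hclose_key hcl⟩
    rw [h] at key
    have hK : pathClass (f.trans g.symm) ∈ K := hHK key
    rw [pathClass_trans_s9, pathClass_symm] at hK
    have h2 : pathClass f = pathClass g * ((pathClass g)⁻¹ * pathClass f) := by group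
    rw [h2]
    exact K.mul_mem hg hK
  · intro p hp
    obtain ⟨f, rfl⟩ := pathClass_surjective p
    exact ⟨f, f, rfl, hp, hclose_refl f⟩
end
end
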